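/- Let Y, F, B be finite random variables with joint distribution P. Define Uni(Y; B|F) = min over Q in Δ_P of I_Q(Y; B | F), where Δ_P is the set of joint distributions Q on (Y,F,B) with Q_{YF} = P_{YF} and Q_{YB} = P_{YB}. Then Uni(Y; B|F) = 0 if and only if there exists a row-stochastic matrix T ∈ [0,1]^{|F|×|B|} (i.e., each row sums to 1) such that P_{YB}(y,b) = Σ_f P_{YF}(y,f) T(f,b) for all y, b. -/
import Mathlib


open scoped BigOperators

section PID

/-- A joint probability distribution on a product of three finite types,
represented as a nonnegative function summing to one. -/
def IsDist3 {Y F B : Type*} [Fintype Y] [Fintype F] [Fintype B]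
    (P : Y → F → B → ℝ) : Prop :=
  (∀ y f b, 0 ≤ P y f b) ∧ ∑ y, ∑ f, ∑ b, P y f b = 1

/-- Marginal on (Y, F). -/
def margYF {Y F B : Type*} [Fintype B] (P : Y → F → B → ℝ) (y : Y) (f : F) : ℝ :=
  ∑ b, P y f b

/-- Marginal on (Y, B). -/
def margYB {Y F B : Type*} [Fintype F] (P : Y → F → B → ℝ) (y : Y) (b : B) : ℝ :=
  ∑ f, P y f b

/-- Marginal on (F, B). -/
def margFB {Y F B : Type*} [Fintype Y] (P : Y → F → B → ℝ) (f : F) (b : B) : ℝ :=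
  ∑ y, P y f b

/-- Marginal on Y. -/
def margY {Y F B : Type*} [Fintype F] [Fintype B] (P : Y → F → B → ℝ) (y : Y) : ℝ :=
  ∑ f, ∑ b, P y f b

/-- Marginal on F. -/
def margF {Y F B : Type*} [Fintype Y] [Fintype B] (P : Y → F → B → ℝ) (f : F) : ℝ :=
  ∑ y, ∑ b, P y f b

/-- Marginal on B. -/
def margB {Y F B : Type*} [Fintype Y] [Fintype F] (P : Y → F → B → ℝ) (b : B) : ℝ :=
  ∑ y, ∑ f, P y f b

/-- Conditional mutual information I_Q(Y ; B | F) for a joint distribution `Q`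
on `Y × F × B` (natural log; `0 log 0 = 0` conventions via `Real.log 0 = 0`
and division-by-zero conventions). -/
noncomputable def condMI {Y F B : Type*} [Fintype Y] [Fintype F] [Fintype B]
    (Q : Y → F → B → ℝ) : ℝ :=
  ∑ y, ∑ f, ∑ b, Q y f b *
    Real.log ((Q y f b * margF Q f) / (margYF Q y f * margFB Q f b))

/-- Mutual information I_P(Y ; B). -/
noncomputable def mutYB {Y F B : Type*} [Fintype Y] [Fintype F] [Fintype B]
    (P : Y → F → B → ℝ) : ℝ :=
  ∑ y, ∑ b, margYB P y b * Real.log (margYB P y b / (margY P y * margB P b))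

/-- Mutual information I_P(Y ; F). -/
noncomputable def mutYF {Y F B : Type*} [Fintype Y] [Fintype F] [Fintype B]
    (P : Y → F → B → ℝ) : ℝ :=
  ∑ y, ∑ f, margYF P y f * Real.log (margYF P y f / (margY P y * margF P f))

/-- Mutual information I_P(Y ; (F, B)). -/
noncomputable def mutYFB {Y F B : Type*} [Fintype Y] [Fintype F] [Fintype B]
    (P : Y → F → B → ℝ) : ℝ :=
  ∑ y, ∑ f, ∑ b, P y f b * Real.log (P y f b / (margY P y * margFB P f b))

/-- The feasible set Δ_P of joint distributions matching the (Y,F) and (Y,B)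
marginals of `P`. -/
def Delta {Y F B : Type*} [Fintype Y] [Fintype F] [Fintype B]
    (P : Y → F → B → ℝ) : Set (Y → F → B → ℝ) :=
  {Q | IsDist3 Q ∧ (∀ y f, margYF Q y f = margYF P y f) ∧
      (∀ y b, margYB Q y b = margYB P y b)}

/-- Unique information Uni(Y ; B | F) (Bertschinger et al.):
the infimum of I_Q(Y ; B | F) over Q ∈ Δ_P. -/
noncomputable def uni {Y F B : Type*} [Fintype Y] [Fintype F] [Fintype B]
    (P : Y → F → B → ℝ) : ℝ :=
  sInf (condMI '' Delta P)

/-- A matrix with entries in [0,1] whose rows each sum to 1. -/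
def RowStochastic {F B : Type*} [Fintype B] (T : F → B → ℝ) : Prop :=
  (∀ f b, 0 ≤ T f b ∧ T f b ≤ 1) ∧ ∀ f, ∑ b, T f b = 1

end PID

section Aux

noncomputable def Qstar {Y F B : Type*} [Fintype Y] [Fintype F] [Fintype B]
    (Q : Y → F → B → ℝ) (y : Y) (f : F) (b : B) : ℝ :=
  margYF Q y f * margFB Q f b / margF Q f

section Bounds
variable {Y F B : Type*} [Fintype Y] [Fintype F] [Fintype B] {Q : Y → F → B → ℝ}

lemma margYF_nonneg (h : ∀ y f b, 0 ≤ Q y f b) (y : Y) (f : F) : 0 ≤ margYF Q y f :=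
  Finset.sum_nonneg fun _ _ => h _ _ _

lemma margFB_nonneg (h : ∀ y f b, 0 ≤ Q y f b) (f : F) (b : B) : 0 ≤ margFB Q f b :=
  Finset.sum_nonneg fun _ _ => h _ _ _

lemma margF_nonneg (h : ∀ y f b, 0 ≤ Q y f b) (f : F) : 0 ≤ margF Q f :=
  Finset.sum_nonneg fun _ _ => Finset.sum_nonneg fun _ _ => h _ _ _

lemma le_margYF (h : ∀ y f b, 0 ≤ Q y f b) (y : Y) (f : F) (b : B) :
    Q y f b ≤ margYF Q y f :=
  Finset.single_le_sum (fun b _ => h y f b) (Finset.mem_univ b)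

lemma le_margFB (h : ∀ y f b, 0 ≤ Q y f b) (y : Y) (f : F) (b : B) :
    Q y f b ≤ margFB Q f b :=
  Finset.single_le_sum (fun y _ => h y f b) (Finset.mem_univ y)

lemma margYF_le_margF (h : ∀ y f b, 0 ≤ Q y f b) (y : Y) (f : F) :
    margYF Q y f ≤ margF Q f :=
  Finset.single_le_sum (f := fun y => margYF Q y f)
    (fun y _ => margYF_nonneg h y f) (Finset.mem_univ y)

lemma sum_margYF_eq_margF (f : F) : ∑ y, margYF Q y f = margF Q f := rfl

lemma sum_margFB_eq_margF (f : F) : ∑ b, margFB Q f b = margF Q f := by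
  rw [margF]; exact (Finset.sum_comm).symm

lemma sum_margF_eq_one (hQ : IsDist3 Q) : ∑ f, margF Q f = 1 := by
  rw [← hQ.2]; exact Finset.sum_comm

lemma margF_le_one (hQ : IsDist3 Q) (f : F) : margF Q f ≤ 1 := by
  rw [← sum_margF_eq_one hQ]
  exact Finset.single_le_sum (fun f _ => margF_nonneg hQ.1 f) (Finset.mem_univ f)

lemma margFB_le_margF (h : ∀ y f b, 0 ≤ Q y f b) (f : F) (b : B) :
    margFB Q f b ≤ margF Q f := by
  rw [← sum_margFB_eq_margF]
  exact Finset.single_le_sum (fun b _ => margFB_nonneg h f b) (Finset.mem_univ b)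

lemma margFB_le_one (hQ : IsDist3 Q) (f : F) (b : B) : margFB Q f b ≤ 1 :=
  le_trans (margFB_le_margF hQ.1 f b) (margF_le_one hQ f)

lemma qstar_nonneg (h : ∀ y f b, 0 ≤ Q y f b) (y : Y) (f : F) (b : B) :
    0 ≤ Qstar Q y f b :=
  div_nonneg (mul_nonneg (margYF_nonneg h y f) (margFB_nonneg h f b)) (margF_nonneg h f)

lemma qstar_le_one (hQ : IsDist3 Q) (y : Y) (f : F) (b : B) : Qstar Q y f b ≤ 1 := by
  rcases eq_or_lt_of_le (margF_nonneg hQ.1 f) with h0 | h0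
  · simp [Qstar, ← h0]
  · rw [Qstar, div_le_one h0]
    calc margYF Q y f * margFB Q f b ≤ margF Q f * 1 :=
          mul_le_mul (margYF_le_margF hQ.1 y f) (margFB_le_one hQ f b)
            (margFB_nonneg hQ.1 f b) (margF_nonneg hQ.1 f)
      _ = margF Q f := mul_one _

lemma sum_qstar_f (f : F) : ∑ y, ∑ b, Qstar Q y f b = margF Q f := by
  have h1 : ∀ y : Y, ∑ b, Qstar Q y f b = margYF Q y f * margF Q f / margF Q f := by
    intro y
    simp only [Qstar]
    rw [← Finset.sum_div, ← Finset.mul_sum, sum_margFB_eq_margF]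
  simp_rw [h1]
  rcases eq_or_ne (margF Q f) 0 with h0 | h0
  · simp [h0]
  · have h2 : ∀ y : Y, margYF Q y f * margF Q f / margF Q f = margYF Q y f := fun y =>
      mul_div_cancel_right₀ _ h0
    simp_rw [h2]
    exact sum_margYF_eq_margF f

lemma sum_qstar (hQ : IsDist3 Q) : ∑ y, ∑ f, ∑ b, Qstar Q y f b = 1 := by
  rw [Finset.sum_comm]
  have : ∀ f : F, ∑ y, ∑ b, Qstar Q y f b = margF Q f := sum_qstar_f
  simp_rw [this]
  exact sum_margF_eq_one hQ

end Bounds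

lemma log_key {p q : ℝ} (hp : 0 < p) (hp1 : p ≤ 1) (hq : 0 < q) (hq1 : q ≤ 1) :
    p - q + (p - q)^2/4 ≤ p * Real.log (p/q) := by
  set r : ℝ := (p + q)/2 with hrdef
  have hr : 0 < r := by positivity
  have h1 : Real.log (r/p) ≤ r/p - 1 := Real.log_le_sub_one_of_pos (by positivity)
  have h2 : Real.log (q/r) ≤ q/r - 1 := Real.log_le_sub_one_of_pos (by positivity)
  have hlog : Real.log (p/q) = -Real.log (r/p) - Real.log (q/r) := by
    rw [Real.log_div hp.ne' hq.ne', Real.log_div hr.ne' hp.ne', Real.log_div hq.ne' hr.ne']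
    ring
  have hmain : 2*p - r - p*(q/r) ≤ p * Real.log (p/q) := by
    rw [hlog]
    have := mul_le_mul_of_nonneg_left h1 hp.le
    have := mul_le_mul_of_nonneg_left h2 hp.le
    have hrp : p * (r/p) = r := by field_simp
    nlinarith
  refine le_trans ?_ hmain
  have hd : q/r * r = q := div_mul_cancel₀ _ hr.ne'
  nlinarith [sq_nonneg (p - q), mul_pos hp hq, sq_nonneg (p+q)]

section Key
variable {Y F B : Type*} [Fintype Y] [Fintype F] [Fintype B] {Q : Y → F → B → ℝ}

lemma entry_le_one (hQ : IsDist3 Q) (y : Y) (f : F) (b : B) : Q y f b ≤ 1 :=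
  le_trans (le_margYF hQ.1 y f b) (le_trans (margYF_le_margF hQ.1 y f) (margF_le_one hQ f))

lemma condMI_term_ge (hQ : IsDist3 Q) (y : Y) (f : F) (b : B) :
    (Q y f b - Qstar Q y f b) + (Q y f b - Qstar Q y f b)^2/4 ≤
      Q y f b * Real.log ((Q y f b * margF Q f) / (margYF Q y f * margFB Q f b)) := by
  rcases eq_or_lt_of_le (hQ.1 y f b) with h0 | hp
  · rw [← h0]
    have h1 := qstar_nonneg hQ.1 y f b
    have h2 := qstar_le_one hQ y f b
    nlinarith
  · have hYF : 0 < margYF Q y f := lt_of_lt_of_le hp (le_margYF hQ.1 y f b)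
    have hFB : 0 < margFB Q f b := lt_of_lt_of_le hp (le_margFB hQ.1 y f b)
    have hF : 0 < margF Q f := lt_of_lt_of_le hYF (margYF_le_margF hQ.1 y f)
    have hq : 0 < Qstar Q y f b := div_pos (mul_pos hYF hFB) hF
    have harg : (Q y f b * margF Q f) / (margYF Q y f * margFB Q f b)
        = Q y f b / Qstar Q y f b := by
      rw [Qstar]
      field_simp
    rw [harg]
    exact log_key hp (entry_le_one hQ y f b) hq (qstar_le_one hQ y f b)

lemma key_ineq (hQ : IsDist3 Q) :
    ∑ y, ∑ f, ∑ b, (Q y f b - Qstar Q y f b)^2 ≤ 4 * condMI Q := by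
  have hsum : ∑ y, ∑ f, ∑ b,
      ((Q y f b - Qstar Q y f b) + (Q y f b - Qstar Q y f b)^2/4) ≤ condMI Q := by
    refine Finset.sum_le_sum fun y _ => Finset.sum_le_sum fun f _ =>
      Finset.sum_le_sum fun b _ => condMI_term_ge hQ y f b
  have hsplit : ∑ y, ∑ f, ∑ b,
      ((Q y f b - Qstar Q y f b) + (Q y f b - Qstar Q y f b)^2/4)
      = (∑ y, ∑ f, ∑ b, (Q y f b - Qstar Q y f b))
        + (∑ y, ∑ f, ∑ b, (Q y f b - Qstar Q y f b)^2)/4 := by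
    simp [Finset.sum_add_distrib, Finset.sum_div]
  have hzero : ∑ y, ∑ f, ∑ b, (Q y f b - Qstar Q y f b) = 0 := by
    simp only [Finset.sum_sub_distrib]
    rw [hQ.2, sum_qstar hQ]
    ring
  rw [hsplit, hzero] at hsum
  linarith

lemma condMI_nonneg (hQ : IsDist3 Q) : 0 ≤ condMI Q := by
  have h := key_ineq hQ
  have h2 : (0:ℝ) ≤ ∑ y, ∑ f, ∑ b, (Q y f b - Qstar Q y f b)^2 :=
    Finset.sum_nonneg fun _ _ => Finset.sum_nonneg fun _ _ =>
      Finset.sum_nonneg fun _ _ => sq_nonneg _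
  linarith

end Key

end Aux

/-- Uni(Y;B|F) = 0 iff there is a row-stochastic matrix T with
P_{YB}(y,b) = Σ_f P_{YF}(y,f) T(f,b). -/
theorem stmt0 {Y F B : Type*} [Fintype Y] [Fintype F] [Fintype B]
    (P : Y → F → B → ℝ) (hP : IsDist3 P) :
    uni P = 0 ↔ ∃ T : F → B → ℝ, RowStochastic T ∧
      ∀ y b, margYB P y b = ∑ f, margYF P y f * T f b := by
  classical
  constructor
  · -- uni P = 0 → ∃ T
    intro h
    have hPD : P ∈ Delta P := ⟨hP, fun _ _ => rfl, fun _ _ => rfl⟩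
    have hne : (condMI '' Delta P).Nonempty := ⟨_, ⟨P, hPD, rfl⟩⟩
    have hlb : ∀ x ∈ condMI '' Delta P, (0:ℝ) ≤ x := by
      rintro x ⟨Q, hQ, rfl⟩; exact condMI_nonneg hQ.1
    have hB : Nonempty B := by
      by_contra hB
      rw [not_nonempty_iff] at hB
      have h2 := hP.2
      simp [Finset.univ_eq_empty] at h2
    have hF : Nonempty F := by
      by_contra hF
      rw [not_nonempty_iff] at hF
      have h2 := hP.2
      simp [Finset.univ_eq_empty] at h2
    obtain ⟨b₀⟩ := hB
    set K : Set (F → B → ℝ) := {T | RowStochastic T} with hKdef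
    have hclosed : IsClosed K := by
      have hKeq : K = (⋂ f, ⋂ b, {T : F → B → ℝ | T f b ∈ Set.Icc (0:ℝ) 1}) ∩
          (⋂ f, {T : F → B → ℝ | ∑ b, T f b = 1}) := by
        ext T
        simp only [hKdef, RowStochastic, Set.mem_setOf_eq, Set.mem_inter_iff,
          Set.mem_iInter, Set.mem_Icc]
        try tauto
      rw [hKeq]
      refine IsClosed.inter (isClosed_iInter fun f => isClosed_iInter fun b => ?_)
        (isClosed_iInter fun f => ?_)
      · exact IsClosed.preimage ((continuous_apply b).comp (continuous_apply f)) isClosed_Icc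
      · exact isClosed_eq (continuous_finset_sum _ fun b _ =>
          (continuous_apply b).comp (continuous_apply f)) continuous_const
    have hsub : K ⊆ Set.univ.pi (fun _ : F => Set.univ.pi fun _ : B => Set.Icc (0:ℝ) 1) := by
      rintro T ⟨h1, _⟩
      rw [Set.mem_univ_pi]
      intro f
      rw [Set.mem_univ_pi]
      intro b
      exact ⟨(h1 f b).1, (h1 f b).2⟩
    have hKcomp : IsCompact K :=
      IsCompact.of_isClosed_subset
        (isCompact_univ_pi fun _ => isCompact_univ_pi fun _ => isCompact_Icc) hclosed hsub
    have hKne : K.Nonempty := by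
      refine ⟨fun f b => if b = b₀ then 1 else 0, ⟨?_, ?_⟩⟩
      · intro f b; by_cases hb : b = b₀ <;> simp [hb]
      · intro f; simp
    set Φ : (F → B → ℝ) → ℝ :=
      fun T => ∑ y, ∑ b, (margYB P y b - ∑ f, margYF P y f * T f b)^2 with hΦdef
    have hΦcont : Continuous Φ := by
      refine continuous_finset_sum _ fun y _ => continuous_finset_sum _ fun b _ => ?_
      refine Continuous.pow (Continuous.sub continuous_const
        (continuous_finset_sum _ fun f _ => Continuous.mul continuous_const
          ((continuous_apply b).comp (continuous_apply f)))) 2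
    obtain ⟨T₀, hT₀K, hT₀min⟩ := hKcomp.exists_isMinOn hKne hΦcont.continuousOn
    have hεstep : ∀ ε : ℝ, 0 < ε → Φ T₀ ≤ (Fintype.card F : ℝ) * (4 * ε) := by
      intro ε hε
      have hinf : sInf (condMI '' Delta P) < ε := by
        have h0 : sInf (condMI '' Delta P) = 0 := h
        rw [h0]; exact hε
      obtain ⟨x, ⟨Q, hQΔ, rfl⟩, hxlt⟩ := exists_lt_of_csInf_lt hne hinf
      obtain ⟨hQd, hQYF, hQYB⟩ := hQΔ
      have hd2 : ∑ y, ∑ f, ∑ b, (Q y f b - Qstar Q y f b)^2 ≤ 4*ε := by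
        have := key_ineq hQd
        linarith
      set T : F → B → ℝ := fun f b =>
        if margF Q f = 0 then (if b = b₀ then 1 else 0) else margFB Q f b / margF Q f
        with hTdef
      have hTK : T ∈ K := by
        constructor
        · intro f b
          by_cases h0 : margF Q f = 0
          · by_cases hb : b = b₀ <;> simp [hTdef, h0, hb]
          · have hF0 : 0 < margF Q f :=
              lt_of_le_of_ne (margF_nonneg hQd.1 f) (Ne.symm h0)
            simp only [hTdef, if_neg h0]
            exact ⟨div_nonneg (margFB_nonneg hQd.1 f b) hF0.le,
              (div_le_one hF0).mpr (margFB_le_margF hQd.1 f b)⟩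
        · intro f
          by_cases h0 : margF Q f = 0
          · simp [hTdef, h0]
          · simp only [hTdef, if_neg h0]
            rw [← Finset.sum_div, sum_margFB_eq_margF, div_self h0]
      have hTerm : ∀ y f b, margYF Q y f * T f b = Qstar Q y f b := by
        intro y f b
        by_cases h0 : margF Q f = 0
        · have hy0 : margYF Q y f = 0 :=
            le_antisymm (h0 ▸ margYF_le_margF hQd.1 y f) (margYF_nonneg hQd.1 y f)
          simp [hTdef, h0, hy0, Qstar]
        · simp only [hTdef, if_neg h0, Qstar]
          rw [mul_div_assoc]
      have hD : ∀ y b, margYB P y b - ∑ f, margYF P y f * T f b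
          = ∑ f, (Q y f b - Qstar Q y f b) := by
        intro y b
        rw [← hQYB y b, margYB, Finset.sum_sub_distrib]
        congr 1
        refine Finset.sum_congr rfl fun f _ => ?_
        rw [← hQYF y f, hTerm]
      have hΦT : Φ T ≤ (Fintype.card F : ℝ) * (4*ε) := by
        have hstep1 : Φ T = ∑ y, ∑ b, (∑ f, (Q y f b - Qstar Q y f b))^2 := by
          rw [hΦdef]
          exact Finset.sum_congr rfl fun y _ => Finset.sum_congr rfl fun b _ => by
            rw [hD y b]
        have hstep2 : ∀ y b, (∑ f, (Q y f b - Qstar Q y f b))^2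
            ≤ (Fintype.card F : ℝ) * ∑ f, (Q y f b - Qstar Q y f b)^2 := by
          intro y b
          have := sq_sum_le_card_mul_sum_sq
            (s := (Finset.univ : Finset F)) (f := fun f => Q y f b - Qstar Q y f b)
          simpa using this
        calc Φ T = ∑ y, ∑ b, (∑ f, (Q y f b - Qstar Q y f b))^2 := hstep1
          _ ≤ ∑ y, ∑ b, (Fintype.card F : ℝ) * ∑ f, (Q y f b - Qstar Q y f b)^2 :=
              Finset.sum_le_sum fun y _ => Finset.sum_le_sum fun b _ => hstep2 y b
          _ = (Fintype.card F : ℝ) * ∑ y, ∑ b, ∑ f, (Q y f b - Qstar Q y f b)^2 := by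
              simp [Finset.mul_sum]
          _ = (Fintype.card F : ℝ) * ∑ y, ∑ f, ∑ b, (Q y f b - Qstar Q y f b)^2 := by
              congr 1
              exact Finset.sum_congr rfl fun y _ => Finset.sum_comm
          _ ≤ (Fintype.card F : ℝ) * (4*ε) :=
              mul_le_mul_of_nonneg_left hd2 (Nat.cast_nonneg _)
      exact le_trans (hT₀min hTK) hΦT
    have hΦ0 : Φ T₀ = 0 := by
      have hnn : 0 ≤ Φ T₀ :=
        Finset.sum_nonneg fun _ _ => Finset.sum_nonneg fun _ _ => sq_nonneg _
      rcases eq_or_lt_of_le hnn with h0 | h0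
      · exact h0.symm
      · exfalso
        have hcF : (0:ℝ) < (Fintype.card F : ℝ) := by
          have := Fintype.card_pos_iff.mpr hF
          exact_mod_cast this
        have hst := hεstep (Φ T₀ / (8 * (Fintype.card F : ℝ))) (by positivity)
        have heq : (Fintype.card F : ℝ) * (4 * (Φ T₀ / (8 * (Fintype.card F : ℝ))))
            = Φ T₀ / 2 := by
          field_simp
          ring
        rw [heq] at hst
        linarith
    refine ⟨T₀, hT₀K, fun y b => ?_⟩
    have h1 := (Finset.sum_eq_zero_iff_of_nonneg
      (fun y _ => Finset.sum_nonneg fun b _ => sq_nonneg _)).mp hΦ0 y (Finset.mem_univ y)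
    have h2 := (Finset.sum_eq_zero_iff_of_nonneg
      (fun b _ => sq_nonneg _)).mp h1 b (Finset.mem_univ b)
    have h3 : margYB P y b - ∑ f, margYF P y f * T₀ f b = 0 :=
      pow_eq_zero_iff two_ne_zero |>.mp h2
    linarith
  · -- ∃ T → uni P = 0
    rintro ⟨T, ⟨hT01, hTrow⟩, hTP⟩
    set Q0 : Y → F → B → ℝ := fun y f b => margYF P y f * T f b with hQ0def
    have hQ0nn : ∀ y f b, 0 ≤ Q0 y f b := fun y f b =>
      mul_nonneg (margYF_nonneg hP.1 y f) (hT01 f b).1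
    have hQ0YF : ∀ y f, margYF Q0 y f = margYF P y f := by
      intro y f
      show ∑ b, margYF P y f * T f b = margYF P y f
      rw [← Finset.mul_sum, hTrow f, mul_one]
    have hQ0sum : ∑ y, ∑ f, ∑ b, Q0 y f b = 1 := by
      have : ∀ y f, ∑ b, Q0 y f b = margYF P y f := hQ0YF
      simp_rw [this]
      exact hP.2
    have hQ0YB : ∀ y b, margYB Q0 y b = margYB P y b := by
      intro y b
      show ∑ f, margYF P y f * T f b = margYB P y b
      exact (hTP y b).symm
    have hQ0Δ : Q0 ∈ Delta P := ⟨⟨hQ0nn, hQ0sum⟩, hQ0YF, hQ0YB⟩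
    have hF0 : ∀ f, margF Q0 f = ∑ y', margYF P y' f := by
      intro f
      refine Finset.sum_congr rfl fun y _ => ?_
      show ∑ b, margYF P y f * T f b = margYF P y f
      rw [← Finset.mul_sum, hTrow f, mul_one]
    have hFB0 : ∀ f b, margFB Q0 f b = (∑ y', margYF P y' f) * T f b := by
      intro f b
      show ∑ y', margYF P y' f * T f b = (∑ y', margYF P y' f) * T f b
      rw [Finset.sum_mul]
    have hxx : ∀ x : ℝ, Real.log (x / x) = 0 := by
      intro x
      rcases eq_or_ne x 0 with hx | hx
      · simp [hx]
      · rw [div_self hx, Real.log_one]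
    have hcond0 : condMI Q0 = 0 := by
      rw [condMI]
      refine Finset.sum_eq_zero fun y _ => Finset.sum_eq_zero fun f _ =>
        Finset.sum_eq_zero fun b _ => ?_
      have hnd : Q0 y f b * margF Q0 f = margYF Q0 y f * margFB Q0 f b := by
        rw [hQ0YF, hF0, hFB0]
        show margYF P y f * T f b * ∑ y', margYF P y' f
          = margYF P y f * ((∑ y', margYF P y' f) * T f b)
        ring
      rw [hnd, hxx, mul_zero]
    have hmem : (0:ℝ) ∈ condMI '' Delta P := ⟨Q0, hQ0Δ, hcond0⟩
    have hlb : ∀ x ∈ condMI '' Delta P, (0:ℝ) ≤ x := by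
      rintro x ⟨Q, hQ, rfl⟩; exact condMI_nonneg hQ.1
    exact le_antisymm (csInf_le ⟨0, hlb⟩ hmem) (le_csInf ⟨0, hmem⟩ hlb)
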